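/- Let T = (t_{ijkl}) be a 4th-order 2-dimensional symmetric tensor with real entries satisfying t_{1111} = t_{2222} = 1, |t_{1112}| = |t_{1222}| = |t_{1122}| = 1. Then T is positive semidefinite if and only if t_{1122} = 1. -/
import Mathlib


/-- **Lemma 2.2(i).** A 4th-order 2-dimensional symmetric tensor with
`t1111 = t2222 = 1` and `|t1112| = |t1222| = |t1122| = 1` is positive semidefinite
if and only if `t1122 = 1`. -/
theorem stmt_2 (t1111 t1112 t1122 t1222 t2222 : ℝ)
    (h1111 : t1111 = 1) (h2222 : t2222 = 1)
    (h1112 : |t1112| = 1) (h1222 : |t1222| = 1) (h1122 : |t1122| = 1) :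
    (∀ x1 x2 : ℝ,
      0 ≤ t1111 * x1^4 + 4 * t1112 * x1^3 * x2 + 6 * t1122 * x1^2 * x2^2
        + 4 * t1222 * x1 * x2^3 + t2222 * x2^4) ↔ t1122 = 1 := by
  subst h1111 h2222
  rcases abs_eq (by norm_num : (0:ℝ) ≤ 1) |>.mp h1112 with ha | ha <;>
  rcases abs_eq (by norm_num : (0:ℝ) ≤ 1) |>.mp h1222 with hb | hb <;>
  rcases abs_eq (by norm_num : (0:ℝ) ≤ 1) |>.mp h1122 with hc | hc <;>
  subst ha hb hc <;>
  constructor <;> intro h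
  all_goals try rfl
  all_goals first
  | (exfalso; linarith [h 1 1, h 1 (-1)])
  | (intro x y
     nlinarith [sq_nonneg (x^2 + 2*x*y + y^2), sq_nonneg (x^2 - 2*x*y + y^2),
       sq_nonneg (x^2 + 2*x*y - y^2), sq_nonneg (x^2 - 2*x*y - y^2),
       sq_nonneg (x*y)])
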